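/- Let X₀ ~ N(0, Q) with Q > 0, and let X₁ = Σ_{i=1}^n (X₀ + aᵢ)·1_{X₀ ∈ (−B_{i+1}, −Bᵢ]} + (X₀ − aᵢ)·1_{X₀ ∈ [Bᵢ, B_{i+1})}, with 0 = B₁ ≤ … ≤ Bₙ, B_{n+1} = ∞, and 0 ≤ a₁ ≤ … ≤ aₙ. Then E[X₁²] = Q − 4√Q · Σ_{i=1}^n aᵢ (φ(Bᵢ/√Q) − φ(B_{i+1}/√Q)) + 2 Σ_{i=1}^n aᵢ² pᵢ, where pᵢ = Φ(B_{i+1}/√Q) − Φ(Bᵢ/√Q) and φ, Φ are the standard normal PDF and CDF (with φ(∞) = 0, Φ(∞) = 1). -/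

import Mathlib

open Real MeasureTheory ProbabilityTheory Finset
open scoped NNReal

/-- Standard normal PDF. -/
noncomputable def stdPdf (x : ℝ) : ℝ :=
  (Real.sqrt (2 * Real.pi))⁻¹ * Real.exp (-x ^ 2 / 2)

/-- Standard normal CDF. -/
noncomputable def stdCdf (t : ℝ) : ℝ := ∫ s in Set.Iic t, stdPdf s



lemma stdPdf_eq (x : ℝ) : stdPdf x = (Real.sqrt (2*π))⁻¹ * rexp (-(2⁻¹) * x^2) := by
  rw [stdPdf]; ring_nf

lemma stdPdf_nonneg (x : ℝ) : 0 ≤ stdPdf x :=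
  mul_nonneg (inv_nonneg.2 (Real.sqrt_nonneg _)) (Real.exp_nonneg _)

lemma stdPdf_even (x : ℝ) : stdPdf (-x) = stdPdf x := by simp [stdPdf]

lemma continuous_stdPdf : Continuous stdPdf := by
  unfold stdPdf; fun_prop

lemma integrable_stdPdf : Integrable stdPdf := by
  have := (integrable_exp_neg_mul_sq (by norm_num : (0:ℝ) < 2⁻¹)).const_mul (Real.sqrt (2*π))⁻¹
  have h : (fun x => (Real.sqrt (2*π))⁻¹ * rexp (-2⁻¹ * x^2)) = stdPdf := by
    funext x; exact (stdPdf_eq x).symm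
  rwa [h] at this

lemma stdPdf_eq_gaussianPDFReal : stdPdf = ProbabilityTheory.gaussianPDFReal 0 1 := by
  funext x
  simp [stdPdf, ProbabilityTheory.gaussianPDFReal, neg_div]

lemma integral_stdPdf : ∫ x, stdPdf x = 1 := by
  rw [stdPdf_eq_gaussianPDFReal]
  exact ProbabilityTheory.integral_gaussianPDFReal_eq_one 0 one_ne_zero

lemma integrable_mul_stdPdf : Integrable (fun x => x * stdPdf x) := by
  have := (integrable_mul_exp_neg_mul_sq (by norm_num : (0:ℝ) < 2⁻¹)).const_mul (Real.sqrt (2*π))⁻¹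
  have h : (fun x => (Real.sqrt (2*π))⁻¹ * (x * rexp (-2⁻¹ * x^2))) = fun x => x * stdPdf x := by
    funext x; rw [stdPdf_eq]; ring
  rwa [h] at this

lemma integrable_sq_mul_stdPdf : Integrable (fun x => x^2 * stdPdf x) := by
  have h2 := integrable_rpow_mul_exp_neg_mul_sq (by norm_num : (0:ℝ) < 2⁻¹) (by norm_num : (-1:ℝ) < 2)
  have := h2.const_mul (Real.sqrt (2*π))⁻¹
  have h : (fun x => (Real.sqrt (2*π))⁻¹ * (x ^ (2:ℝ) * rexp (-2⁻¹ * x^2))) = fun x => x^2 * stdPdf x := by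
    funext x; rw [stdPdf_eq, ← Real.rpow_natCast x 2]; push_cast; ring
  rwa [h] at this

lemma hasDerivAt_stdPdf (x : ℝ) : HasDerivAt stdPdf (-x * stdPdf x) x := by
  have h1 : HasDerivAt (fun y : ℝ => -y^2/2) (-x) x := by
    have := ((hasDerivAt_pow 2 x).neg.div_const 2)
    exact this.congr_deriv (by push_cast; ring)
  have := (h1.exp).const_mul (Real.sqrt (2*π))⁻¹
  have h : stdPdf = fun y => (Real.sqrt (2*π))⁻¹ * rexp (-y^2/2) := rfl
  rw [h]
  exact this.congr_deriv (by beta_reduce; ring)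

lemma tendsto_stdPdf_atTop : Filter.Tendsto stdPdf Filter.atTop (nhds 0) := by
  have h1 : Filter.Tendsto (fun x : ℝ => -x^2/2) Filter.atTop Filter.atBot := by
    apply Filter.Tendsto.atBot_div_const (by norm_num : (0:ℝ) < 2)
    exact Filter.tendsto_neg_atTop_atBot.comp (Filter.tendsto_pow_atTop two_ne_zero)
  have h2 := (Real.tendsto_exp_atBot).comp h1
  have h3 := h2.const_mul (Real.sqrt (2*π))⁻¹
  rw [mul_zero] at h3
  exact h3.congr (fun x => by simp only [Function.comp, stdPdf, neg_div])

lemma tendsto_mul_stdPdf_atTop : Filter.Tendsto (fun x => x * stdPdf x) Filter.atTop (nhds 0) := by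
  have hexp : Filter.Tendsto (fun x : ℝ => rexp (-(1/2) * x)) Filter.atTop (nhds 0) := by
    apply Real.tendsto_exp_atBot.comp
    apply Filter.Tendsto.const_mul_atTop_of_neg (by norm_num : (-(1/2):ℝ) < 0) Filter.tendsto_id
  have h := (rpow_mul_exp_neg_mul_sq_isLittleO_exp_neg (by norm_num : (0:ℝ) < 2⁻¹) 1).tendsto_zero_of_tendsto hexp
  have := h.const_mul (Real.sqrt (2*π))⁻¹
  rw [mul_zero] at this
  apply this.congr'
  filter_upwards [Filter.eventually_ge_atTop (0:ℝ)] with x hx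
  rw [Real.rpow_one, stdPdf_eq]; ring

lemma stdCdf_add_Ioi (t : ℝ) : stdCdf t + ∫ x in Set.Ioi t, stdPdf x = 1 := by
  have h := integral_add_compl (measurableSet_Iic (a := t)) integrable_stdPdf
  rw [Set.compl_Iic] at h
  rw [stdCdf, h, integral_stdPdf]

lemma integral_stdPdf_Ioi (t : ℝ) : ∫ x in Set.Ioi t, stdPdf x = 1 - stdCdf t := by
  have := stdCdf_add_Ioi t; linarith

lemma stdCdf_zero : stdCdf 0 = 2⁻¹ := by
  have h1 : stdCdf 0 = ∫ x in Set.Ioi (0:ℝ), stdPdf x := by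
    rw [stdCdf, ← neg_zero, ← integral_comp_neg_Iic]
    simp_rw [stdPdf_even]
    rw [neg_zero]
  have h2 := stdCdf_add_Ioi 0
  linarith

lemma integral_mul_stdPdf_Ioi (t : ℝ) : ∫ x in Set.Ioi t, x * stdPdf x = stdPdf t := by
  have h := integral_Ioi_of_hasDerivAt_of_tendsto (f := fun x => -stdPdf x)
    (f' := fun x => x * stdPdf x) (a := t) (m := 0)
    (continuous_stdPdf.neg.continuousWithinAt)
    (fun x _ => (hasDerivAt_stdPdf x).neg.congr_deriv (by ring))
    (integrable_mul_stdPdf.integrableOn)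
    (tendsto_stdPdf_atTop.neg.congr (fun x => rfl) |>.mono_right (by rw [neg_zero]))
  simpa using h

lemma integral_sq_mul_stdPdf_Ioi (t : ℝ) :
    ∫ x in Set.Ioi t, x^2 * stdPdf x = t * stdPdf t + (1 - stdCdf t) := by
  have hd : ∀ x : ℝ, HasDerivAt (fun y => -(y * stdPdf y)) (x^2 * stdPdf x - stdPdf x) x := by
    intro x
    have := ((hasDerivAt_id x).mul (hasDerivAt_stdPdf x)).neg
    exact this.congr_deriv (by simp only [id_eq]; ring)
  have hint : IntegrableOn (fun x => x^2 * stdPdf x - stdPdf x) (Set.Ioi t) :=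
    (integrable_sq_mul_stdPdf.sub integrable_stdPdf).integrableOn
  have htend : Filter.Tendsto (fun x => -(x * stdPdf x)) Filter.atTop (nhds 0) := by
    have := tendsto_mul_stdPdf_atTop.neg; rwa [neg_zero] at this
  have h := integral_Ioi_of_hasDerivAt_of_tendsto
    ((continuous_id.mul continuous_stdPdf).neg.continuousWithinAt)
    (fun x _ => hd x) hint htend
  have hsplit : ∫ x in Set.Ioi t, (x^2 * stdPdf x - stdPdf x) =
      (∫ x in Set.Ioi t, x^2 * stdPdf x) - ∫ x in Set.Ioi t, stdPdf x :=
    integral_sub integrable_sq_mul_stdPdf.integrableOn integrable_stdPdf.integrableOn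
  rw [hsplit, integral_stdPdf_Ioi] at h
  simp only [neg_zero, sub_neg_eq_add, id_eq, Pi.neg_apply, Pi.mul_apply] at h
  linarith

section scaled
variable {σ : ℝ}

lemma integral_q_Ioi (hσ : 0 < σ) (b : ℝ) :
    ∫ x in Set.Ioi b, σ⁻¹ * stdPdf (x/σ) = 1 - stdCdf (b/σ) := by
  have h : ∀ x : ℝ, σ⁻¹ * stdPdf (x/σ) = σ⁻¹ * stdPdf (σ⁻¹ * x) := by
    intro x; rw [div_eq_inv_mul]
  simp_rw [h]
  rw [integral_const_mul, integral_comp_mul_left_Ioi stdPdf b (inv_pos.mpr hσ),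
    smul_eq_mul, ← mul_assoc, inv_inv]
  rw [inv_mul_cancel₀ hσ.ne', one_mul, integral_stdPdf_Ioi]
  rw [mul_comm σ⁻¹ b, ← div_eq_mul_inv]

lemma integral_mul_q_Ioi (hσ : 0 < σ) (b : ℝ) :
    ∫ x in Set.Ioi b, x * (σ⁻¹ * stdPdf (x/σ)) = σ * stdPdf (b/σ) := by
  have h : ∀ x : ℝ, x * (σ⁻¹ * stdPdf (x/σ)) = (fun y => y * stdPdf y) (σ⁻¹ * x) := by
    intro x; simp only [div_eq_inv_mul]; ring
  simp_rw [h]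
  rw [integral_comp_mul_left_Ioi (fun y => y * stdPdf y) b (inv_pos.mpr hσ),
    smul_eq_mul, inv_inv, integral_mul_stdPdf_Ioi, mul_comm σ⁻¹ b, ← div_eq_mul_inv]

lemma integral_sq_mul_q_Ioi (hσ : 0 < σ) (b : ℝ) :
    ∫ x in Set.Ioi b, x^2 * (σ⁻¹ * stdPdf (x/σ)) =
      σ^2 * ((b/σ) * stdPdf (b/σ) + (1 - stdCdf (b/σ))) := by
  have h : ∀ x : ℝ, x^2 * (σ⁻¹ * stdPdf (x/σ)) = σ * (fun y => y^2 * stdPdf y) (σ⁻¹ * x) := by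
    intro x
    have hne := hσ.ne'
    simp only [div_eq_inv_mul, mul_pow]
    field_simp
  simp_rw [h]
  rw [integral_const_mul, integral_comp_mul_left_Ioi (fun y => y^2 * stdPdf y) b (inv_pos.mpr hσ),
    smul_eq_mul, inv_inv, integral_sq_mul_stdPdf_Ioi, mul_comm σ⁻¹ b, ← div_eq_mul_inv]
  ring

lemma integrable_q (hσ : 0 < σ) : Integrable (fun x => σ⁻¹ * stdPdf (x/σ)) := by
  have := (integrable_comp_mul_left_iff stdPdf (R := σ⁻¹) (inv_ne_zero hσ.ne')).mpr integrable_stdPdf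
  have h2 := this.const_mul σ⁻¹
  refine h2.congr (Filter.Eventually.of_forall fun x => ?_)
  simp only [div_eq_inv_mul]

lemma integrable_mul_q (hσ : 0 < σ) : Integrable (fun x => x * (σ⁻¹ * stdPdf (x/σ))) := by
  have := (integrable_comp_mul_left_iff (fun y => y * stdPdf y) (R := σ⁻¹)
    (inv_ne_zero hσ.ne')).mpr integrable_mul_stdPdf
  refine this.congr (Filter.Eventually.of_forall fun x => ?_)
  simp only [div_eq_inv_mul]
  ring

lemma integrable_sq_mul_q (hσ : 0 < σ) : Integrable (fun x => x^2 * (σ⁻¹ * stdPdf (x/σ))) := by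
  have := (integrable_comp_mul_left_iff (fun y => y^2 * stdPdf y) (R := σ⁻¹)
    (inv_ne_zero hσ.ne')).mpr integrable_sq_mul_stdPdf
  have h2 := this.const_mul σ
  have hne := hσ.ne'
  refine h2.congr (Filter.Eventually.of_forall fun x => ?_)
  simp only [mul_pow, div_eq_inv_mul]
  field_simp

lemma integrable_sub_sq_mul_q (hσ : 0 < σ) (a : ℝ) :
    Integrable (fun x => (x - a)^2 * (σ⁻¹ * stdPdf (x/σ))) := by
  have h := (integrable_sq_mul_q hσ).sub (((integrable_mul_q hσ).const_mul (2*a)).sub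
    ((integrable_q hσ).const_mul (a^2)))
  refine h.congr (Filter.Eventually.of_forall fun x => ?_)
  simp only [Pi.sub_apply, Pi.neg_apply]
  ring

lemma integral_sub_sq_mul_q_Ioi (hσ : 0 < σ) (b a : ℝ) :
    ∫ x in Set.Ioi b, (x - a)^2 * (σ⁻¹ * stdPdf (x/σ)) =
      σ^2 * ((b/σ) * stdPdf (b/σ) + (1 - stdCdf (b/σ)))
        - 2*a*(σ * stdPdf (b/σ)) + a^2 * (1 - stdCdf (b/σ)) := by
  have h : ∀ x : ℝ, (x - a)^2 * (σ⁻¹ * stdPdf (x/σ)) =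
      x^2 * (σ⁻¹ * stdPdf (x/σ)) - (2*a) * (x * (σ⁻¹ * stdPdf (x/σ)))
        + a^2 * (σ⁻¹ * stdPdf (x/σ)) := by intro x; ring
  simp_rw [h]
  have i2 : IntegrableOn (fun x => 2*a*(x*(σ⁻¹ * stdPdf (x/σ)))) (Set.Ioi b) volume :=
    ((integrable_mul_q hσ).const_mul (2*a)).integrableOn
  have i1 : IntegrableOn
      (fun x => x^2*(σ⁻¹ * stdPdf (x/σ)) - 2*a*(x*(σ⁻¹ * stdPdf (x/σ)))) (Set.Ioi b) volume :=
    ((integrable_sq_mul_q hσ).integrableOn).sub i2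
  have i3 : IntegrableOn (fun x => a^2*(σ⁻¹ * stdPdf (x/σ))) (Set.Ioi b) volume :=
    ((integrable_q hσ).const_mul (a^2)).integrableOn
  rw [integral_add i1 i3, integral_sub ((integrable_sq_mul_q hσ).integrableOn) i2,
    integral_const_mul, integral_const_mul,
    integral_q_Ioi hσ, integral_mul_q_Ioi hσ, integral_sq_mul_q_Ioi hσ]

end scaled

lemma integrable_add_sq_mul_q {σ : ℝ} (hσ : 0 < σ) (a : ℝ) :
    Integrable (fun x => (x + a)^2 * (σ⁻¹ * stdPdf (x/σ))) := by
  have := integrable_sub_sq_mul_q hσ (-a)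
  simpa [sub_neg_eq_add] using this

lemma gaussianPDFReal_eq_q (Q : ℝ≥0) (hQ : 0 < (Q:ℝ)) (x : ℝ) :
    ProbabilityTheory.gaussianPDFReal 0 Q x = (Real.sqrt Q)⁻¹ * stdPdf (x / Real.sqrt Q) := by
  unfold ProbabilityTheory.gaussianPDFReal stdPdf
  have h1 : -(x-0)^2/(2*(Q:ℝ)) = -(x / Real.sqrt Q)^2 / 2 := by
    rw [div_pow, Real.sq_sqrt hQ.le]; ring
  rw [h1, show 2*π*(Q:ℝ) = (2*π)*(Q:ℝ) by ring,
    Real.sqrt_mul (by positivity) (Q:ℝ), mul_inv]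
  ring

lemma integral_Ico_split (h : ℝ → ℝ) (hint : Integrable h) {b c : ℝ} (hbc : b ≤ c) :
    ∫ x in Set.Ico b c, h x = (∫ x in Set.Ioi b, h x) - ∫ x in Set.Ioi c, h x := by
  have hu : Set.Ioc b c ∪ Set.Ioi c = Set.Ioi b := Set.Ioc_union_Ioi_eq_Ioi hbc
  have hd : Disjoint (Set.Ioc b c) (Set.Ioi c) := by
    apply Set.disjoint_left.mpr
    intro x hx hx'
    exact absurd hx.2 (not_le.mpr hx')
  rw [integral_Ico_eq_integral_Ioo, ← integral_Ioc_eq_integral_Ioo, ← hu,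
    setIntegral_union hd measurableSet_Ioi hint.integrableOn hint.integrableOn]
  ring

lemma integral_indicator_comp_neg (S T : Set ℝ) (h k : ℝ → ℝ)
    (hST : ∀ x, -x ∈ S ↔ x ∈ T) (hk : ∀ x, h (-x) = k x) :
    ∫ x, S.indicator h x = ∫ x, T.indicator k x := by
  rw [← integral_neg_eq_self (fun x => S.indicator h x) volume]
  congr 1
  funext x
  show S.indicator h (-x) = T.indicator k x
  by_cases hx : x ∈ T
  · rw [Set.indicator_of_mem ((hST x).mpr hx), Set.indicator_of_mem hx, hk]
  · rw [Set.indicator_of_notMem (fun h' => hx ((hST x).mp h')), Set.indicator_of_notMem hx]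

lemma sq_sum_eq (n : ℕ) (u : ℕ → ℝ) (h : ∀ i < n, ∀ j < n, i ≠ j → u i * u j = 0) :
    (∑ i ∈ Finset.range n, u i)^2 = ∑ i ∈ Finset.range n, (u i)^2 := by
  rw [sq, Finset.sum_mul_sum]
  apply Finset.sum_congr rfl
  intro i hi
  rw [Finset.sum_eq_single i]
  · exact (sq (u i)).symm
  · intro j hj hne
    exact h i (Finset.mem_range.mp hi) j (Finset.mem_range.mp hj) (Ne.symm hne)
  · intro hcon; exact absurd hi hcon

lemma sum_mul_sum_eq_zero (n : ℕ) (u v : ℕ → ℝ)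
    (h : ∀ i < n, ∀ j < n, u i * v j = 0) :
    (∑ i ∈ Finset.range n, u i) * (∑ j ∈ Finset.range n, v j) = 0 := by
  rw [Finset.sum_mul_sum]
  apply Finset.sum_eq_zero
  intro i hi
  apply Finset.sum_eq_zero
  intro j hj
  exact h i (Finset.mem_range.mp hi) j (Finset.mem_range.mp hj)

lemma sq_sum_add_eq (n : ℕ) (u v : ℕ → ℝ)
    (hu : ∀ i < n, ∀ j < n, i ≠ j → u i * u j = 0)
    (hv : ∀ i < n, ∀ j < n, i ≠ j → v i * v j = 0)
    (huv : ∀ i < n, ∀ j < n, u i * v j = 0) :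
    (∑ i ∈ Finset.range n, (u i + v i))^2 =
      ∑ i ∈ Finset.range n, ((u i)^2 + (v i)^2) := by
  rw [Finset.sum_add_distrib, add_sq, sq_sum_eq n u hu, sq_sum_eq n v hv,
    mul_assoc, sum_mul_sum_eq_zero n u v huv, Finset.sum_add_distrib]
  ring

noncomputable def Eaux (σ b c : ℝ) : ℝ :=
  σ^2*((b/σ)*stdPdf (b/σ) + (1 - stdCdf (b/σ))) - 2*c*(σ*stdPdf (b/σ))
    + c^2*(1 - stdCdf (b/σ))

lemma integral_sub_sq_mul_q_Ioi' {σ : ℝ} (hσ : 0 < σ) (b a : ℝ) :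
    ∫ x in Set.Ioi b, (x - a)^2 * (σ⁻¹ * stdPdf (x/σ)) = Eaux σ b a :=
  integral_sub_sq_mul_q_Ioi hσ b a

noncomputable def gaux (σ : ℝ) (Bf : ℕ → ℝ) (n j : ℕ) : ℝ :=
  if j = n then 0 else 2*(σ^2*((Bf j/σ)*stdPdf (Bf j/σ) + (1 - stdCdf (Bf j/σ))))

lemma summand_eq (σ : ℝ) (n i : ℕ) (hi : i < n) (Bf : ℕ → ℝ) (ai : ℝ) :
    2 * (Eaux σ (Bf i) ai - (if i+1 = n then 0 else Eaux σ (Bf (i+1)) ai)) =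
    (gaux σ Bf n i - gaux σ Bf n (i+1))
    + (-(4*σ) * (ai * (stdPdf (Bf i/σ) - (if i+1 = n then 0 else stdPdf (Bf (i+1)/σ)))))
    + 2 * (ai^2 * (if i+1 = n then 1 - stdCdf (Bf i/σ)
        else stdCdf (Bf (i+1)/σ) - stdCdf (Bf i/σ))) := by
  unfold Eaux gaux
  by_cases h : i + 1 = n
  · subst h
    simp only [if_pos rfl, Nat.left_eq_add, OfNat.ofNat_ne_zero, one_ne_zero, if_neg,
      if_false, Nat.succ_ne_self]
    simp
    ring
  · simp only [if_neg h, if_neg (Nat.ne_of_lt hi)]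
    ring


theorem stmt_12 {Ω : Type*} [MeasurableSpace Ω] (μ : Measure Ω) [IsProbabilityMeasure μ]
    (X₀ : Ω → ℝ) (hX₀ : Measurable X₀) (Q : ℝ≥0) (hQ : 0 < Q)
    (hlaw : μ.map X₀ = gaussianReal 0 Q)
    (n : ℕ) (hn : 1 ≤ n) (a B : ℕ → ℝ)
    (hB0 : B 0 = 0) (hBmono : ∀ i, i + 1 < n → B i ≤ B (i + 1))
    (ha0 : 0 ≤ a 0) (hamono : ∀ i, i + 1 < n → a i ≤ a (i + 1)) :
    ∫ ω, (∑ i ∈ Finset.range n,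
        ((X₀ ω + a i) *
          (if i + 1 = n then Set.indicator (Set.Iic (-(B i))) (fun _ => (1 : ℝ)) (X₀ ω)
           else Set.indicator (Set.Ioc (-(B (i + 1))) (-(B i))) (fun _ => (1 : ℝ)) (X₀ ω)) +
         (X₀ ω - a i) *
          (if i + 1 = n then Set.indicator (Set.Ici (B i)) (fun _ => (1 : ℝ)) (X₀ ω)
           else Set.indicator (Set.Ico (B i) (B (i + 1))) (fun _ => (1 : ℝ)) (X₀ ω)))) ^ 2 ∂μ =
      (Q : ℝ) -
        4 * Real.sqrt Q * ∑ i ∈ Finset.range n, a i *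
          (stdPdf (B i / Real.sqrt Q) -
            (if i + 1 = n then 0 else stdPdf (B (i + 1) / Real.sqrt Q))) +
        2 * ∑ i ∈ Finset.range n, (a i) ^ 2 *
          (if i + 1 = n then 1 - stdCdf (B i / Real.sqrt Q)
           else stdCdf (B (i + 1) / Real.sqrt Q) - stdCdf (B i / Real.sqrt Q)) := by
  have hQpos : (0:ℝ) < Q := hQ
  set σ : ℝ := Real.sqrt Q with hσdef
  have hσ : 0 < σ := Real.sqrt_pos.mpr hQpos
  have hσQ : σ^2 = (Q:ℝ) := Real.sq_sqrt hQpos.le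
  set N : ℕ → Set ℝ := fun i =>
    if i + 1 = n then Set.Iic (-(B i)) else Set.Ioc (-(B (i+1))) (-(B i)) with hN
  set P : ℕ → Set ℝ := fun i =>
    if i + 1 = n then Set.Ici (B i) else Set.Ico (B i) (B (i+1)) with hP
  have hNmeas : ∀ i, MeasurableSet (N i) := fun i => by
    by_cases h : i + 1 = n <;> simp [hN, h]
  have hPmeas : ∀ i, MeasurableSet (P i) := fun i => by
    by_cases h : i + 1 = n <;> simp [hP, h]
  set F0 : ℝ → ℝ := fun x => ∑ i ∈ Finset.range n,
    ((x + a i) * (N i).indicator (fun _ => (1:ℝ)) x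
      + (x - a i) * (P i).indicator (fun _ => (1:ℝ)) x) with hF0
  have hF0meas : Measurable F0 := by
    apply Finset.measurable_sum
    intro i _
    exact ((measurable_id.add_const (a i)).mul
        (measurable_const.indicator (hNmeas i))).add
      ((measurable_id.sub_const (a i)).mul (measurable_const.indicator (hPmeas i)))
  have hid : ∀ x : ℝ, (∑ i ∈ Finset.range n,
        ((x + a i) *
          (if i + 1 = n then Set.indicator (Set.Iic (-(B i))) (fun _ => (1 : ℝ)) x
           else Set.indicator (Set.Ioc (-(B (i + 1))) (-(B i))) (fun _ => (1 : ℝ)) x) +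
         (x - a i) *
          (if i + 1 = n then Set.indicator (Set.Ici (B i)) (fun _ => (1 : ℝ)) x
           else Set.indicator (Set.Ico (B i) (B (i + 1))) (fun _ => (1 : ℝ)) x))) ^ 2
      = (F0 x)^2 := by
    intro x
    congr 1
    apply Finset.sum_congr rfl
    intro i _
    by_cases h : i + 1 = n <;> simp [hN, hP, h]
  simp only [hid]
  rw [← integral_map hX₀.aemeasurable ((hF0meas.pow_const 2).aestronglyMeasurable),
    hlaw, gaussianReal_of_var_ne_zero 0 hQ.ne']
  have hgd : gaussianPDF 0 Q = fun x => ((gaussianPDFReal 0 Q x).toNNReal : ENNReal) := rfl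
  rw [hgd, integral_withDensity_eq_integral_smul
    ((measurable_gaussianPDFReal 0 Q).real_toNNReal) (fun x => (F0 x)^2)]
  have hsmul : ∀ x : ℝ, (gaussianPDFReal 0 Q x).toNNReal • (F0 x)^2
      = (σ⁻¹ * stdPdf (x/σ)) * (F0 x)^2 := by
    intro x
    rw [NNReal.smul_def, Real.coe_toNNReal _ (gaussianPDFReal_nonneg 0 Q x),
      smul_eq_mul, gaussianPDFReal_eq_q Q hQpos, ← hσdef]
  simp only [hsmul]
  -- monotonicity facts
  have hBmono' : ∀ i j, i ≤ j → j < n → B i ≤ B j := by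
    intro i j hij
    induction hij with
    | refl => intro _; exact le_rfl
    | @step m hm ih =>
      intro hmn
      exact le_trans (ih (Nat.lt_of_succ_lt hmn)) (hBmono m hmn)
  have hB0le : ∀ i, i < n → 0 ≤ B i := fun i hi => hB0 ▸ hBmono' 0 i (Nat.zero_le i) hi
  -- pointwise membership facts
  have hNle : ∀ j, j < n → ∀ y : ℝ, y ∈ N j → y ≤ -B j := by
    intro j hj y hy
    by_cases h : j + 1 = n
    · simp [hN, h] at hy; linarith
    · simp [hN, h] at hy; linarith [hy.2]
  have hNgt : ∀ i, i + 1 < n → ∀ y : ℝ, y ∈ N i → -B (i+1) < y := by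
    intro i hi y hy
    have h : ¬ (i + 1 = n) := Nat.ne_of_lt hi
    simp [hN, h] at hy; exact hy.1
  have hPge : ∀ j, j < n → ∀ y : ℝ, y ∈ P j → B j ≤ y := by
    intro j hj y hy
    by_cases h : j + 1 = n
    · simpa [hP, h] using hy
    · simp [hP, h] at hy; exact hy.1
  have hPlt : ∀ i, i + 1 < n → ∀ y : ℝ, y ∈ P i → y < B (i+1) := by
    intro i hi y hy
    have h : ¬ (i + 1 = n) := Nat.ne_of_lt hi
    simp [hP, h] at hy; exact hy.2
  have key : ∀ x : ℝ, x ≠ 0 → (σ⁻¹ * stdPdf (x/σ)) * (F0 x)^2 =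
      ∑ i ∈ Finset.range n,
        ((N i).indicator (fun y => (y + a i)^2 * (σ⁻¹ * stdPdf (y/σ))) x
          + (P i).indicator (fun y => (y - a i)^2 * (σ⁻¹ * stdPdf (y/σ))) x) := by
    intro x hx
    set u : ℕ → ℝ := fun i => (x + a i) * (N i).indicator (fun _ => (1:ℝ)) x with hu
    set v : ℕ → ℝ := fun i => (x - a i) * (P i).indicator (fun _ => (1:ℝ)) x with hv
    have hNdisj : ∀ i j, i < j → j < n → x ∈ N i → x ∈ N j → False := by
      intro i j hij hjn hxi hxj
      have h1 : -B (i+1) < x := hNgt i (Nat.lt_of_le_of_lt hij hjn) x hxi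
      have h2 : x ≤ -B j := hNle j hjn x hxj
      have h3 : B (i+1) ≤ B j := hBmono' (i+1) j hij hjn
      linarith
    have hPdisj : ∀ i j, i < j → j < n → x ∈ P i → x ∈ P j → False := by
      intro i j hij hjn hxi hxj
      have h1 : x < B (i+1) := hPlt i (Nat.lt_of_le_of_lt hij hjn) x hxi
      have h2 : B j ≤ x := hPge j hjn x hxj
      have h3 : B (i+1) ≤ B j := hBmono' (i+1) j hij hjn
      linarith
    have hu_mul : ∀ i < n, ∀ j < n, i ≠ j → u i * u j = 0 := by
      intro i hi j hj hne
      by_cases hxi : x ∈ N i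
      · have hxj : x ∉ N j := by
          intro hxj
          rcases hne.lt_or_gt with hij | hij
          · exact hNdisj i j hij hj hxi hxj
          · exact hNdisj j i hij hi hxj hxi
        simp [hu, Set.indicator_of_notMem hxj]
      · simp [hu, Set.indicator_of_notMem hxi]
    have hv_mul : ∀ i < n, ∀ j < n, i ≠ j → v i * v j = 0 := by
      intro i hi j hj hne
      by_cases hxi : x ∈ P i
      · have hxj : x ∉ P j := by
          intro hxj
          rcases hne.lt_or_gt with hij | hij
          · exact hPdisj i j hij hj hxi hxj
          · exact hPdisj j i hij hi hxj hxi
        simp [hv, Set.indicator_of_notMem hxj]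
      · simp [hv, Set.indicator_of_notMem hxi]
    have huv_mul : ∀ i < n, ∀ j < n, u i * v j = 0 := by
      intro i hi j hj
      by_cases hxi : x ∈ N i
      · have hxj : x ∉ P j := by
          intro hxj
          have h1 : x ≤ -B i := hNle i hi x hxi
          have h2 : B j ≤ x := hPge j hj x hxj
          have h3 : 0 ≤ B i := hB0le i hi
          have h4 : 0 ≤ B j := hB0le j hj
          exact hx (le_antisymm (by linarith) (by linarith))
        simp [hv, Set.indicator_of_notMem hxj]
      · simp [hu, Set.indicator_of_notMem hxi]
    have hFx : F0 x = ∑ i ∈ Finset.range n, (u i + v i) := by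
      simp only [hF0, hu, hv]
    rw [hFx, sq_sum_add_eq n u v hu_mul hv_mul huv_mul, Finset.mul_sum]
    apply Finset.sum_congr rfl
    intro i _
    by_cases hxi : x ∈ N i <;> by_cases hxj : x ∈ P i <;>
      simp [hu, hv, Set.indicator_of_mem, Set.indicator_of_notMem, hxi, hxj] <;>
      ring
  have hae : (fun x => (σ⁻¹ * stdPdf (x/σ)) * (F0 x)^2) =ᵐ[(volume : Measure ℝ)]
      fun x => ∑ i ∈ Finset.range n,
        ((N i).indicator (fun y => (y + a i)^2 * (σ⁻¹ * stdPdf (y/σ))) x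
          + (P i).indicator (fun y => (y - a i)^2 * (σ⁻¹ * stdPdf (y/σ))) x) := by
    have h0 : ∀ᵐ (x : ℝ) ∂(volume : Measure ℝ), x ≠ 0 := by
      rw [ae_iff]
      simp only [ne_eq, not_not]
      have hset : {x : ℝ | x = 0} = {0} := by ext y; simp
      rw [hset]
      exact measure_singleton 0
    filter_upwards [h0] with x hx using key x hx
  rw [integral_congr_ae hae, integral_finset_sum
    (f := fun i x => (N i).indicator (fun y => (y + a i)^2 * (σ⁻¹ * stdPdf (y/σ))) x
      + (P i).indicator (fun y => (y - a i)^2 * (σ⁻¹ * stdPdf (y/σ))) x) _ (fun i _ =>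
    ((integrable_add_sq_mul_q hσ (a i)).indicator (hNmeas i)).add
      ((integrable_sub_sq_mul_q hσ (a i)).indicator (hPmeas i)))]
  have hterm : ∀ i ∈ Finset.range n,
      (∫ x, ((N i).indicator (fun y => (y + a i)^2 * (σ⁻¹ * stdPdf (y/σ))) x
          + (P i).indicator (fun y => (y - a i)^2 * (σ⁻¹ * stdPdf (y/σ))) x)) =
      2 * (Eaux σ (B i) (a i) - (if i + 1 = n then 0 else Eaux σ (B (i+1)) (a i))) := by
    intro i hi
    have hin : i < n := Finset.mem_range.mp hi
    rw [integral_add ((integrable_add_sq_mul_q hσ (a i)).indicator (hNmeas i))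
      ((integrable_sub_sq_mul_q hσ (a i)).indicator (hPmeas i))]
    have hneg : ∫ x, (N i).indicator (fun y => (y + a i)^2 * (σ⁻¹ * stdPdf (y/σ))) x
        = ∫ x, (P i).indicator (fun y => (y - a i)^2 * (σ⁻¹ * stdPdf (y/σ))) x := by
      apply integral_indicator_comp_neg
      · intro y
        by_cases h : i + 1 = n
        · simp only [hN, hP, if_pos h, Set.mem_Iic, Set.mem_Ici]
          constructor <;> intro <;> linarith
        · simp only [hN, hP, if_neg h, Set.mem_Ioc, Set.mem_Ico]
          constructor <;> rintro ⟨h1, h2⟩ <;> constructor <;> linarith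
      · intro y
        rw [neg_div, stdPdf_even]
        ring
    have hpos : ∫ x, (P i).indicator (fun y => (y - a i)^2 * (σ⁻¹ * stdPdf (y/σ))) x =
        Eaux σ (B i) (a i) - (if i + 1 = n then 0 else Eaux σ (B (i+1)) (a i)) := by
      rw [integral_indicator (hPmeas i)]
      by_cases h : i + 1 = n
      · have hPi : P i = Set.Ici (B i) := by simp [hP, h]
        rw [hPi, if_pos h, sub_zero, integral_Ici_eq_integral_Ioi,
          integral_sub_sq_mul_q_Ioi' hσ (B i) (a i)]
      · have hin' : i + 1 < n := lt_of_le_of_ne (Nat.succ_le_of_lt hin) h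
        have hPi : P i = Set.Ico (B i) (B (i+1)) := by simp [hP, h]
        rw [hPi, if_neg h,
          integral_Ico_split _ (integrable_sub_sq_mul_q hσ (a i)) (hBmono i hin'),
          integral_sub_sq_mul_q_Ioi' hσ (B i) (a i),
          integral_sub_sq_mul_q_Ioi' hσ (B (i+1)) (a i)]
    rw [hneg, hpos]
    ring
  rw [Finset.sum_congr rfl hterm,
    Finset.sum_congr rfl (fun i hi => summand_eq σ n i (Finset.mem_range.mp hi) B (a i)),
    Finset.sum_add_distrib, Finset.sum_add_distrib, Finset.sum_range_sub' (gaux σ B n) n]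
  have hg0 : gaux σ B n 0 - gaux σ B n n = (Q:ℝ) := by
    have hn0 : (0:ℕ) ≠ n := by omega
    rw [gaux, gaux, if_pos rfl, if_neg hn0, hB0, sub_zero, zero_div, zero_mul, zero_add,
      stdCdf_zero, hσQ]
    ring
  rw [hg0, ← Finset.mul_sum, ← Finset.mul_sum]
  ring
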